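/- For any continuation (p1,p2R,p2A,t) with p1>0, the following hold: (1) every point in the support of p2R is at most t; (2) every point in the support of p2A is at least p1; (3) every point in the support of p2R is at most the monopoly price p*; (4) every point in the support of p2A is at least p*; (5) p1 ≤ t. Consequently the indifference equation can be rewritten as t - p1 + E[max(t-p2A,0)] = t - E[p2R]. -/

import Mathlib

open MeasureTheory Set Filter

noncomputable section

namespace RepeatedSales

/-- `F` is the CDF of an atomless distribution fully supported on `[0,1]`:
continuous, strictly increasing on `[0,1]`, with `F 0 = 0` and `F 1 = 1`. -/
structure NiceCDF (F : ℝ → ℝ) : Prop where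
  cont : Continuous F
  mono : StrictMonoOn F (Icc (0:ℝ) 1)
  zero : F 0 = 0
  one : F 1 = 1

/-- The (price-posting) revenue curve `R(p) = p (1 - F p)`. -/
def Rcurve (F : ℝ → ℝ) (p : ℝ) : ℝ := p * (1 - F p)

/-- The CDF truncated at `x` from above: `F_{≤x}(v) = min (F v / F x) 1`. -/
def Fle (F : ℝ → ℝ) (x v : ℝ) : ℝ := min (F v / F x) 1

/-- The CDF truncated at `x` from below: `F_{≥x}(v) = max ((F v - F x)/(1 - F x)) 0`. -/
def Fge (F : ℝ → ℝ) (x v : ℝ) : ℝ := max ((F v - F x) / (1 - F x)) 0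

/-- Revenue curve of the truncated distribution `F_{≤x}`. -/
def Rle (F : ℝ → ℝ) (x p : ℝ) : ℝ := p * (1 - Fle F x p)

/-- Revenue curve of the truncated distribution `F_{≥x}`. -/
def Rge (F : ℝ → ℝ) (x p : ℝ) : ℝ := p * (1 - Fge F x p)

/-- Posterior probability of sophistication after a reject. -/
def muR (F : ℝ → ℝ) (μ p1 t : ℝ) : ℝ := μ * F t / (μ * F t + (1 - μ) * F p1)

/-- Posterior probability of sophistication after an accept. -/
def muA (F : ℝ → ℝ) (μ p1 t : ℝ) : ℝ :=
  μ * (1 - F t) / (μ * (1 - F t) + (1 - μ) * (1 - F p1))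

/-- The seller's posterior CDF over values after a first-round reject. -/
def FrejCDF (F : ℝ → ℝ) (μ p1 t v : ℝ) : ℝ :=
  muR F μ p1 t * Fle F t v + (1 - muR F μ p1 t) * Fle F p1 v

/-- The seller's posterior CDF over values after a first-round accept. -/
def FaccCDF (F : ℝ → ℝ) (μ p1 t v : ℝ) : ℝ :=
  muA F μ p1 t * Fge F t v + (1 - muA F μ p1 t) * Fge F p1 v

/-- The second-round revenue curve conditioned on a reject. -/
def Rrej (F : ℝ → ℝ) (μ p1 t p : ℝ) : ℝ := p * (1 - FrejCDF F μ p1 t p)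

/-- The second-round revenue curve conditioned on an accept. -/
def Racc (F : ℝ → ℝ) (μ p1 t p : ℝ) : ℝ := p * (1 - FaccCDF F μ p1 t p)

/-- The (topological) support of a measure on `ℝ`: points all of whose
neighborhoods have positive measure. -/
def msupp (ν : Measure ℝ) : Set ℝ := {x | ∀ U ∈ nhds x, ν U ≠ 0}

/-- A continuation `(p1, p2R, p2A, t)` at sophistication level `μ`:
`p2R`, `p2A` are (random) prices, i.e. probability measures supported in `[0,1]`,
every point of the support of `p2R` (resp. `p2A`) maximizes the reject (resp. accept)
revenue curve over `[0,1]`, and the threshold indifference equation holds.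
The denominators defining the posteriors are assumed positive. -/
structure Continuation (F : ℝ → ℝ) (μ p1 : ℝ) (p2R p2A : Measure ℝ) (t : ℝ) : Prop where
  denR_pos : 0 < μ * F t + (1 - μ) * F p1
  denA_pos : 0 < μ * (1 - F t) + (1 - μ) * (1 - F p1)
  probR : IsProbabilityMeasure p2R
  probA : IsProbabilityMeasure p2A
  suppR01 : msupp p2R ⊆ Icc 0 1
  suppA01 : msupp p2A ⊆ Icc 0 1
  optR : ∀ p ∈ msupp p2R, IsMaxOn (Rrej F μ p1 t) (Icc 0 1) p
  optA : ∀ p ∈ msupp p2A, IsMaxOn (Racc F μ p1 t) (Icc 0 1) p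
  indiff : t - p1 + (∫ x, max (t - x) 0 ∂p2A) = ∫ x, max (t - x) 0 ∂p2R

/-- A continuation with deterministic accept price `p2A ≥ t`. -/
def SophFocused (p2A : Measure ℝ) (t : ℝ) : Prop :=
  ∃ a : ℝ, p2A = Measure.dirac a ∧ t ≤ a

/-- A continuation with deterministic accept price `p2A < t`. -/
def NaiveFocused (p2A : Measure ℝ) (t : ℝ) : Prop :=
  ∃ a : ℝ, p2A = Measure.dirac a ∧ a < t

/-- The seller's expected revenue of a continuation at sophistication `μ`. -/
def sellerRev (F : ℝ → ℝ) (μ p1 t : ℝ) (p2R p2A : Measure ℝ) : ℝ :=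
  μ * (p1 * (1 - F t) + (∫ a, (if a ≤ t then a * (1 - F a) else 0) ∂p2A)
      + ∫ r, r * (F t - F r) ∂p2R)
  + (1 - μ) * (p1 * (1 - F p1) + (∫ a, a * (1 - F a) ∂p2A)
      + ∫ r, (if r ≤ p1 then r * (F p1 - F r) else 0) ∂p2R)

/-- **Lemma: price ordering.** For any continuation `(p1,p2R,p2A,t)`
with `p1 > 0`: (1) every support point of `p2R` is at most `t`; (2) every support
point of `p2A` is at least `p1`; (3) every support point of `p2R` is at most the
monopoly price `p*`; (4) every support point of `p2A` is at least `p*`; (5) `p1 ≤ t`;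
and consequently the indifference equation can be rewritten as
`t - p1 + E[max (t - p2A) 0] = t - E[p2R]`. -/
/- ===== auxiliary lemmas ===== -/

lemma msupp_compl_null (ν : Measure ℝ) : ν (msupp ν)ᶜ = 0 := by
  have hx : ∀ x : ((msupp ν)ᶜ : Set ℝ), ∃ U : Set ℝ, IsOpen U ∧ (x : ℝ) ∈ U ∧ ν U = 0 := by
    rintro ⟨x, hx⟩
    have hx' : ¬ ∀ U ∈ nhds x, ν U ≠ 0 := hx
    push_neg at hx'
    obtain ⟨U, hU, hν⟩ := hx'
    obtain ⟨V, hVU, hVo, hxV⟩ := mem_nhds_iff.mp hU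
    exact ⟨V, hVo, hxV, measure_mono_null hVU hν⟩
  choose U hUo hxU hU0 using hx
  obtain ⟨T, hTc, hTU⟩ := TopologicalSpace.isOpen_iUnion_countable U hUo
  refine measure_mono_null (fun x hxm => ?_)
    ((measure_biUnion_null_iff hTc).mpr fun i _ => hU0 i)
  rw [hTU]
  exact mem_iUnion.mpr ⟨⟨x, hxm⟩, hxU _⟩

lemma ae_of_msupp (ν : Measure ℝ) {P : ℝ → Prop} (h : ∀ x ∈ msupp ν, P x) :
    ∀ᵐ x ∂ν, P x := by
  rw [ae_iff]
  refine measure_mono_null ?_ (msupp_compl_null ν)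
  intro x hxP hm
  exact hxP (h x hm)

lemma Fge_zero {F : ℝ → ℝ} {x v : ℝ} (h : F v ≤ F x) (hx : F x ≤ 1) : Fge F x v = 0 := by
  unfold Fge
  rcases eq_or_lt_of_le hx with heq | hlt
  · have h0 : (1:ℝ) - F x = 0 := by linarith
    rw [h0, div_zero, max_self]
  · refine max_eq_right (div_nonpos_iff.mpr (Or.inr ⟨by linarith, by linarith⟩))

lemma Fge_val {F : ℝ → ℝ} {x v : ℝ} (hx : F x < 1) (h : F x ≤ F v) :
    Fge F x v = (F v - F x) / (1 - F x) :=
  max_eq_left (div_nonneg (by linarith) (by linarith))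

lemma Fle_one {F : ℝ → ℝ} {x v : ℝ} (hx : 0 < F x) (h : F x ≤ F v) : Fle F x v = 1 :=
  min_eq_right ((one_le_div hx).mpr h)

lemma Fle_val {F : ℝ → ℝ} {x v : ℝ} (hx : 0 < F x) (h : F v ≤ F x) : Fle F x v = F v / F x :=
  min_eq_left ((div_le_one hx).mpr h)

section Rlemmas

variable {F : ℝ → ℝ} (hF : NiceCDF F)
  {pstar : ℝ} (hps_mem : pstar ∈ Icc (0:ℝ) 1)
  (hcon : StrictConcaveOn ℝ (Icc (0:ℝ) 1) (Rcurve F))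
  (hps_max : IsMaxOn (Rcurve F) (Icc (0:ℝ) 1) pstar)
  (hps_uniq : ∀ q ∈ Icc (0:ℝ) 1, IsMaxOn (Rcurve F) (Icc (0:ℝ) 1) q → q = pstar)

include hcon hps_mem hps_max hps_uniq

/-- `R` is strictly increasing on `[0, pstar]`. -/
lemma R_incr {p q : ℝ} (hp : 0 ≤ p) (hpq : p < q) (hq : q ≤ pstar) :
    Rcurve F p < Rcurve F q := by
  have hq1 : q ≤ 1 := hq.trans hps_mem.2
  have hpI : p ∈ Icc (0:ℝ) 1 := ⟨hp, hpq.le.trans hq1⟩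
  have hqI : q ∈ Icc (0:ℝ) 1 := ⟨hp.trans hpq.le, hq1⟩
  rcases eq_or_lt_of_le hq with rfl | hq'
  · have hle : Rcurve F p ≤ Rcurve F q := hps_max hpI
    rcases eq_or_lt_of_le hle with heq | h
    · exfalso
      have hmaxp : IsMaxOn (Rcurve F) (Icc (0:ℝ) 1) p :=
        isMaxOn_iff.mpr fun y hy => (isMaxOn_iff.mp hps_max y hy).trans heq.ge
      have := hps_uniq p hpI hmaxp
      rw [this] at hpq; exact lt_irrefl _ hpq
    · exact h
  · have hc : 0 < pstar - p := by linarith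
    have hc' : pstar - p ≠ 0 := ne_of_gt hc
    have ha0 : 0 < (pstar - q) / (pstar - p) := div_pos (by linarith) hc
    have hb0 : 0 < (q - p) / (pstar - p) := div_pos (by linarith) hc
    have hab : (pstar - q) / (pstar - p) + (q - p) / (pstar - p) = 1 := by
      rw [← add_div, div_eq_one_iff_eq hc']; ring
    have hne : p ≠ pstar := by intro h; rw [h] at hpq; linarith
    have hkey := hcon.2 hpI hps_mem hne ha0 hb0 hab
    simp only [smul_eq_mul] at hkey
    have hco : (pstar - q) / (pstar - p) * p + (q - p) / (pstar - p) * pstar = q := by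
      field_simp
      ring
    rw [hco] at hkey
    have hRp : Rcurve F p ≤ Rcurve F pstar := hps_max hpI
    have hbX : 0 ≤ (q - p) / (pstar - p) * (Rcurve F pstar - Rcurve F p) :=
      mul_nonneg hb0.le (sub_nonneg.mpr hRp)
    have hsum : (pstar - q) / (pstar - p) * Rcurve F p
        + (q - p) / (pstar - p) * Rcurve F p = Rcurve F p := by
      rw [← add_mul, hab, one_mul]
    nlinarith [hkey, hbX, hsum]

/-- `R` is strictly decreasing on `[pstar, 1]`. -/
lemma R_decr {p q : ℝ} (hp : pstar ≤ p) (hpq : p < q) (hq : q ≤ 1) :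
    Rcurve F q < Rcurve F p := by
  have hp0 : 0 ≤ p := hps_mem.1.trans hp
  have hpI : p ∈ Icc (0:ℝ) 1 := ⟨hp0, hpq.le.trans hq⟩
  have hqI : q ∈ Icc (0:ℝ) 1 := ⟨hp0.trans hpq.le, hq⟩
  rcases eq_or_lt_of_le hp with heq | hp'
  · rw [← heq]
    have hle : Rcurve F q ≤ Rcurve F pstar := hps_max hqI
    rcases eq_or_lt_of_le hle with heq2 | h
    · exfalso
      have hmaxq : IsMaxOn (Rcurve F) (Icc (0:ℝ) 1) q :=
        isMaxOn_iff.mpr fun y hy => (isMaxOn_iff.mp hps_max y hy).trans heq2.ge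
      have hqp := hps_uniq q hqI hmaxq
      rw [hqp, ← heq] at hpq
      exact lt_irrefl _ hpq
    · exact h
  · have hc : 0 < q - pstar := by linarith
    have hc' : q - pstar ≠ 0 := ne_of_gt hc
    have ha0 : 0 < (q - p) / (q - pstar) := div_pos (by linarith) hc
    have hb0 : 0 < (p - pstar) / (q - pstar) := div_pos (by linarith) hc
    have hab : (q - p) / (q - pstar) + (p - pstar) / (q - pstar) = 1 := by
      rw [← add_div, div_eq_one_iff_eq hc']; ring
    have hne : pstar ≠ q := by intro h; rw [← h] at hpq; linarith
    have hkey := hcon.2 hps_mem hqI hne ha0 hb0 hab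
    simp only [smul_eq_mul] at hkey
    have hco : (q - p) / (q - pstar) * pstar + (p - pstar) / (q - pstar) * q = p := by
      field_simp
      ring
    rw [hco] at hkey
    have hRq : Rcurve F q ≤ Rcurve F pstar := hps_max hqI
    have haX : 0 ≤ (q - p) / (q - pstar) * (Rcurve F pstar - Rcurve F q) :=
      mul_nonneg ha0.le (sub_nonneg.mpr hRq)
    have hsum : (q - p) / (q - pstar) * Rcurve F q
        + (p - pstar) / (q - pstar) * Rcurve F q = Rcurve F q := by
      rw [← add_mul, hab, one_mul]
    nlinarith [hkey, haX, hsum]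

end Rlemmas

section TruncRev

variable {F : ℝ → ℝ} (hF : NiceCDF F)
  {pstar : ℝ} (hps_mem : pstar ∈ Icc (0:ℝ) 1)
  (hcon : StrictConcaveOn ℝ (Icc (0:ℝ) 1) (Rcurve F))
  (hps_max : IsMaxOn (Rcurve F) (Icc (0:ℝ) 1) pstar)
  (hps_uniq : ∀ q ∈ Icc (0:ℝ) 1, IsMaxOn (Rcurve F) (Icc (0:ℝ) 1) q → q = pstar)

include hF hcon hps_mem hps_max hps_uniq

/-- `Rle F x` is strictly decreasing on `[pstar, x]`. -/
lemma Rle_lt {x p q : ℝ} (hx0 : 0 < x) (hx1 : x ≤ 1)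
    (hp : pstar ≤ p) (hpq : p < q) (hqx : q ≤ x) :
    Rle F x q < Rle F x p := by
  have hmono := hF.mono.monotoneOn
  have hp0 : 0 ≤ p := hps_mem.1.trans hp
  have hq1 : q ≤ 1 := hqx.trans hx1
  have hpI : p ∈ Icc (0:ℝ) 1 := ⟨hp0, hpq.le.trans hq1⟩
  have hqI : q ∈ Icc (0:ℝ) 1 := ⟨hp0.trans hpq.le, hq1⟩
  have hxI : x ∈ Icc (0:ℝ) 1 := ⟨hx0.le, hx1⟩
  have hFx : 0 < F x := by
    have := hF.mono (left_mem_Icc.mpr zero_le_one) hxI hx0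
    rwa [hF.zero] at this
  have hFx1 : F x ≤ 1 := by
    have := hmono hxI (right_mem_Icc.mpr zero_le_one) hx1
    rwa [hF.one] at this
  have hFpx : F p ≤ F x := hmono hpI hxI (hpq.le.trans hqx)
  have hFqx : F q ≤ F x := hmono hqI hxI hqx
  have hR : Rcurve F q < Rcurve F p := R_decr hps_mem hcon hps_max hps_uniq hp hpq hq1
  have hR' : q * (1 - F q) < p * (1 - F p) := hR
  have key : q * (F x - F q) < p * (F x - F p) := by
    nlinarith [mul_nonneg (sub_nonneg.mpr hpq.le) (sub_nonneg.mpr hFx1)]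
  have hrw : ∀ y : ℝ, 1 - y / F x = (F x - y) / F x := by
    intro y; rw [sub_div, div_self (ne_of_gt hFx)]
  unfold Rle
  rw [Fle_val hFx hFqx, Fle_val hFx hFpx, hrw, hrw, ← mul_div_assoc, ← mul_div_assoc]
  exact (div_lt_div_iff_of_pos_right hFx).mpr key

/-- `Rle F x` is nonincreasing on `[pstar, 1]`. -/
lemma Rle_le {x p q : ℝ} (hx0 : 0 < x) (hx1 : x ≤ 1)
    (hp : pstar ≤ p) (hpq : p < q) (hq1 : q ≤ 1) :
    Rle F x q ≤ Rle F x p := by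
  have hmono := hF.mono.monotoneOn
  have hp0 : 0 ≤ p := hps_mem.1.trans hp
  rcases le_or_gt q x with hqx | hxq
  · exact (Rle_lt hF hps_mem hcon hps_max hps_uniq hx0 hx1 hp hpq hqx).le
  · have hxI : x ∈ Icc (0:ℝ) 1 := ⟨hx0.le, hx1⟩
    have hqI : q ∈ Icc (0:ℝ) 1 := ⟨hp0.trans hpq.le, hq1⟩
    have hFx : 0 < F x := by
      have := hF.mono (left_mem_Icc.mpr zero_le_one) hxI hx0
      rwa [hF.zero] at this
    have hFxq : F x ≤ F q := (hF.mono hxI hqI hxq).le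
    have h0 : Rle F x q = 0 := by
      unfold Rle; rw [Fle_one hFx hFxq]; ring
    rw [h0]
    unfold Rle
    have : Fle F x p ≤ 1 := min_le_right _ _
    have hp0' : 0 ≤ p := hp0
    nlinarith

/-- `Rge F x` is strictly increasing on `[0, pstar]`. -/
lemma Rge_lt {x p q : ℝ} (hxI : x ∈ Icc (0:ℝ) 1) (hp0 : 0 ≤ p) (hpq : p < q)
    (hq : q ≤ pstar) :
    Rge F x p < Rge F x q := by
  have hmono := hF.mono.monotoneOn
  have hq1 : q ≤ 1 := hq.trans hps_mem.2
  have hpI : p ∈ Icc (0:ℝ) 1 := ⟨hp0, hpq.le.trans hq1⟩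
  have hqI : q ∈ Icc (0:ℝ) 1 := ⟨hp0.trans hpq.le, hq1⟩
  have hFx1 : F x ≤ 1 := by
    have := hmono hxI (right_mem_Icc.mpr zero_le_one) hxI.2
    rwa [hF.one] at this
  rcases le_or_gt q x with hqx | hxq
  · have h1 : Fge F x p = 0 := Fge_zero (hmono hpI hxI (hpq.le.trans hqx)) hFx1
    have h2 : Fge F x q = 0 := Fge_zero (hmono hqI hxI hqx) hFx1
    unfold Rge; rw [h1, h2]; nlinarith
  · have hFxlt : F x < 1 := by
      have h1 := hF.mono hxI (right_mem_Icc.mpr zero_le_one) (lt_of_lt_of_le hxq hq1)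
      rwa [hF.one] at h1
    have hden : 0 < 1 - F x := by linarith
    have hFxq : F x ≤ F q := (hF.mono hxI hqI hxq).le
    have hqval : Rge F x q = Rcurve F q / (1 - F x) := by
      unfold Rge Rcurve
      rw [Fge_val hFxlt hFxq]
      field_simp
      ring
    rcases le_or_gt p x with hpx | hxp
    · have h1 : Fge F x p = 0 := Fge_zero (hmono hpI hxI hpx) hFx1
      have hRx : Rcurve F x < Rcurve F q :=
        R_incr hps_mem hcon hps_max hps_uniq hxI.1 hxq hq
      have hRx' : x * (1 - F x) < Rcurve F q := hRx
      have hpeq : Rge F x p = p := by unfold Rge; rw [h1]; ring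
      rw [hpeq, hqval, lt_div_iff₀ hden]
      nlinarith [mul_le_mul_of_nonneg_right hpx hden.le]
    · have hFxp : F x ≤ F p := (hF.mono hxI hpI hxp).le
      have hpval : Rge F x p = Rcurve F p / (1 - F x) := by
        unfold Rge Rcurve
        rw [Fge_val hFxlt hFxp]
        field_simp
        ring
      rw [hpval, hqval]
      have hR := R_incr hps_mem hcon hps_max hps_uniq hp0 hpq hq
      exact (div_lt_div_iff_of_pos_right hden).mpr hR

end TruncRev

theorem continuation_price_ordering
    (F : ℝ → ℝ) (hF : NiceCDF F)
    (hcon : StrictConcaveOn ℝ (Icc (0:ℝ) 1) (Rcurve F))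
    (pstar : ℝ) (hps_mem : pstar ∈ Icc (0:ℝ) 1)
    (hps_max : IsMaxOn (Rcurve F) (Icc (0:ℝ) 1) pstar)
    (hps_uniq : ∀ q ∈ Icc (0:ℝ) 1, IsMaxOn (Rcurve F) (Icc (0:ℝ) 1) q → q = pstar)
    (μ p1 t : ℝ) (p2R p2A : Measure ℝ)
    (hμ : μ ∈ Icc (0:ℝ) 1) (hp1 : p1 ∈ Ioc (0:ℝ) 1) (ht : t ∈ Icc (0:ℝ) 1)
    (hc : Continuation F μ p1 p2R p2A t) :
    (∀ p ∈ msupp p2R, p ≤ t) ∧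
    (∀ p ∈ msupp p2A, p1 ≤ p) ∧
    (∀ p ∈ msupp p2R, p ≤ pstar) ∧
    (∀ p ∈ msupp p2A, pstar ≤ p) ∧
    p1 ≤ t ∧
    (t - p1 + (∫ a, max (t - a) 0 ∂p2A) = t - ∫ r, r ∂p2R) := by
  haveI := hc.probR
  haveI := hc.probA
  have hmono := hF.mono.monotoneOn
  have hp1I : p1 ∈ Icc (0:ℝ) 1 := ⟨hp1.1.le, hp1.2⟩
  have h0I : (0:ℝ) ∈ Icc (0:ℝ) 1 := left_mem_Icc.mpr zero_le_one
  have h1I : (1:ℝ) ∈ Icc (0:ℝ) 1 := right_mem_Icc.mpr zero_le_one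
  have hFp1_pos : 0 < F p1 := by
    have := hF.mono h0I hp1I hp1.1; rwa [hF.zero] at this
  have hFp1_le1 : F p1 ≤ 1 := by
    have := hmono hp1I h1I hp1.2; rwa [hF.one] at this
  have hFt_le1 : F t ≤ 1 := by
    have := hmono ht h1I ht.2; rwa [hF.one] at this
  have hFt_nn : 0 ≤ F t := by
    have := hmono h0I ht ht.1; rwa [hF.zero] at this
  -- the identity Racc v = v when v ≤ t and v ≤ p1
  have hRaccId : ∀ v, v ∈ Icc (0:ℝ) 1 → v ≤ t → v ≤ p1 → Racc F μ p1 t v = v := by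
    intro v hvI hvt hvp
    have h1 : Fge F t v = 0 := Fge_zero (hmono hvI ht hvt) hFt_le1
    have h2 : Fge F p1 v = 0 := Fge_zero (hmono hvI hp1I hvp) hFp1_le1
    unfold Racc FaccCDF
    rw [h1, h2]; ring
  -- Claim 5 : p1 ≤ t
  have h5 : p1 ≤ t := by
    by_contra htp1
    push_neg at htp1
    have hA : ∀ a ∈ msupp p2A, t ≤ a := by
      intro a ha
      by_contra hat
      push_neg at hat
      have haI := hc.suppA01 ha
      have h1 : Racc F μ p1 t a = a := hRaccId a haI hat.le (by linarith)
      have h2 : Racc F μ p1 t t = t := hRaccId t ht le_rfl htp1.le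
      have hle : Racc F μ p1 t t ≤ Racc F μ p1 t a := hc.optA a ha ht
      rw [h1, h2] at hle
      linarith
    have hEA : (∫ a, max (t - a) 0 ∂p2A) = 0 := by
      have hae : ∀ᵐ a ∂p2A, max (t - a) 0 = 0 :=
        ae_of_msupp p2A fun a ha => max_eq_right (by linarith [hA a ha])
      rw [integral_congr_ae hae, integral_zero]
    have hRnn : 0 ≤ ∫ r, max (t - r) 0 ∂p2R :=
      integral_nonneg fun r => le_max_right _ _
    have := hc.indiff
    rw [hEA] at this
    linarith
  have hFt_pos : 0 < F t := lt_of_lt_of_le hFp1_pos (hmono hp1I ht h5)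
  have hFp1t : F p1 ≤ F t := hmono hp1I ht h5
  -- Claim 2 : support of p2A lies above p1
  have h2 : ∀ a ∈ msupp p2A, p1 ≤ a := by
    intro a ha
    by_contra hap
    push_neg at hap
    have haI := hc.suppA01 ha
    have h1 : Racc F μ p1 t a = a := hRaccId a haI (by linarith) hap.le
    have h2' : Racc F μ p1 t p1 = p1 := hRaccId p1 hp1I h5 le_rfl
    have hle : Racc F μ p1 t p1 ≤ Racc F μ p1 t a := hc.optA a ha hp1I
    rw [h1, h2'] at hle
    linarith
  -- bounds for the posterior weights
  have hμR0 : 0 ≤ muR F μ p1 t := by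
    unfold muR
    exact div_nonneg (mul_nonneg hμ.1 hFt_nn) hc.denR_pos.le
  have hμR1 : muR F μ p1 t ≤ 1 := by
    unfold muR
    rw [div_le_one hc.denR_pos]
    nlinarith [hμ.1, hμ.2, hFp1_pos]
  have hμA0 : 0 ≤ muA F μ p1 t := by
    unfold muA
    exact div_nonneg (mul_nonneg hμ.1 (by linarith)) hc.denA_pos.le
  have hμA1 : muA F μ p1 t ≤ 1 := by
    unfold muA
    rw [div_le_one hc.denA_pos]
    nlinarith [hμ.1, hμ.2, hFp1_le1]
  -- mixtures
  have hmixR : ∀ p, Rrej F μ p1 t p = muR F μ p1 t * Rle F t p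
      + (1 - muR F μ p1 t) * Rle F p1 p := by
    intro p; unfold Rrej FrejCDF Rle; ring
  have hmixA : ∀ p, Racc F μ p1 t p = muA F μ p1 t * Rge F t p
      + (1 - muA F μ p1 t) * Rge F p1 p := by
    intro p; unfold Racc FaccCDF Rge; ring
  -- positivity of Rrej at p1/2
  have hhI : p1 / 2 ∈ Icc (0:ℝ) 1 := ⟨by linarith [hp1.1], by linarith [hp1.2]⟩
  have hFh : F (p1/2) < F p1 := hF.mono hhI hp1I (by linarith [hp1.1])
  have hFh0 : 0 ≤ F (p1/2) := by
    have := hmono h0I hhI hhI.1; rwa [hF.zero] at this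
  have hposR : 0 < Rrej F μ p1 t (p1/2) := by
    have hA1 : F (p1/2) / F t < 1 := (div_lt_one hFt_pos).mpr (by linarith)
    have hB1 : F (p1/2) / F p1 < 1 := (div_lt_one hFp1_pos).mpr hFh
    have hA0 : 0 ≤ F (p1/2) / F t := div_nonneg hFh0 hFt_pos.le
    have hB0 : 0 ≤ F (p1/2) / F p1 := div_nonneg hFh0 hFp1_pos.le
    have hcomb : muR F μ p1 t * (F (p1/2) / F t)
        + (1 - muR F μ p1 t) * (F (p1/2) / F p1) < 1 := by
      rcases le_total (F (p1/2) / F t) (F (p1/2) / F p1) with h | h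
      · nlinarith [mul_nonneg hμR0 (sub_nonneg.mpr h)]
      · nlinarith [mul_nonneg (sub_nonneg.mpr hμR1) (sub_nonneg.mpr h)]
    have hv1 : Fle F t (p1/2) = F (p1/2) / F t := Fle_val hFt_pos (by linarith)
    have hv2 : Fle F p1 (p1/2) = F (p1/2) / F p1 := Fle_val hFp1_pos hFh.le
    unfold Rrej FrejCDF
    rw [hv1, hv2]
    have := hp1.1
    nlinarith
  -- Claim 1 : support of p2R lies below t
  have h1 : ∀ r ∈ msupp p2R, r ≤ t := by
    intro r hr
    by_contra hrt
    push_neg at hrt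
    have hrI := hc.suppR01 hr
    have hFtr : F t ≤ F r := (hF.mono ht hrI hrt).le
    have h0 : Rrej F μ p1 t r = 0 := by
      unfold Rrej FrejCDF
      rw [Fle_one hFt_pos hFtr, Fle_one hFp1_pos (le_trans hFp1t hFtr)]
      ring
    have hle : Rrej F μ p1 t (p1/2) ≤ Rrej F μ p1 t r := hc.optR r hr hhI
    rw [h0] at hle
    linarith
  -- Claim 3 : support of p2R lies below pstar
  have h3 : ∀ r ∈ msupp p2R, r ≤ pstar := by
    intro r hr
    by_contra hrp
    push_neg at hrp
    have hrI := hc.suppR01 hr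
    have hrt := h1 r hr
    have hmaxr := hc.optR r hr
    have hkey_t : Rle F t r < Rle F t pstar :=
      Rle_lt hF hps_mem hcon hps_max hps_uniq (lt_of_lt_of_le hp1.1 h5) ht.2
        le_rfl hrp hrt
    have hkey_p : Rle F p1 r ≤ Rle F p1 pstar :=
      Rle_le hF hps_mem hcon hps_max hps_uniq hp1.1 hp1.2 le_rfl hrp hrI.2
    have hmax_ps : Rrej F μ p1 t pstar ≤ Rrej F μ p1 t r := hmaxr hps_mem
    rcases eq_or_lt_of_le hμR0 with hz | hpos
    · -- muR = 0
      have hRr : Rrej F μ p1 t r = Rle F p1 r := by rw [hmixR, ← hz]; ring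
      have hRps : Rrej F μ p1 t pstar = Rle F p1 pstar := by rw [hmixR, ← hz]; ring
      have hle2 : Rrej F μ p1 t (p1/2) ≤ Rrej F μ p1 t r := hmaxr hhI
      have hRrpos : 0 < Rrej F μ p1 t r := lt_of_lt_of_le hposR hle2
      have hrp1 : r < p1 := by
        by_contra hge
        push_neg at hge
        have hzero : Rle F p1 r = 0 := by
          unfold Rle
          rw [Fle_one hFp1_pos (hmono hp1I hrI hge)]
          ring
        rw [hRr, hzero] at hRrpos
        exact lt_irrefl _ hRrpos
      have hstrict : Rle F p1 r < Rle F p1 pstar :=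
        Rle_lt hF hps_mem hcon hps_max hps_uniq hp1.1 hp1.2 le_rfl hrp hrp1.le
      linarith [hmax_ps, hstrict, hRr, hRps]
    · have : Rrej F μ p1 t pstar > Rrej F μ p1 t r := by
        rw [hmixR, hmixR]
        nlinarith [mul_le_mul_of_nonneg_left hkey_p (sub_nonneg.mpr hμR1),
          mul_lt_mul_of_pos_left hkey_t hpos]
      linarith [hmax_ps]
  -- Claim 4 : support of p2A lies above pstar
  have h4 : ∀ a ∈ msupp p2A, pstar ≤ a := by
    intro a ha
    by_contra hap
    push_neg at hap
    have haI := hc.suppA01 ha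
    have hk1 : Rge F t a < Rge F t pstar :=
      Rge_lt hF hps_mem hcon hps_max hps_uniq ht haI.1 hap le_rfl
    have hk2 : Rge F p1 a < Rge F p1 pstar :=
      Rge_lt hF hps_mem hcon hps_max hps_uniq hp1I haI.1 hap le_rfl
    have hlt : Racc F μ p1 t a < Racc F μ p1 t pstar := by
      rw [hmixA, hmixA]
      rcases le_total (Rge F t pstar - Rge F t a) (Rge F p1 pstar - Rge F p1 a) with h | h
      · nlinarith [mul_nonneg (sub_nonneg.mpr hμA1) (sub_nonneg.mpr h)]
      · nlinarith [mul_nonneg hμA0 (sub_nonneg.mpr h)]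
    have hle : Racc F μ p1 t pstar ≤ Racc F μ p1 t a := hc.optA a ha hps_mem
    linarith
  -- the rewritten indifference equation
  have h6 : (t - p1 + (∫ a, max (t - a) 0 ∂p2A) = t - ∫ r, r ∂p2R) := by
    have haeR : ∀ᵐ r ∂p2R, max (t - r) 0 = t - r :=
      ae_of_msupp p2R fun r hr => max_eq_left (by linarith [h1 r hr])
    have haeB : ∀ᵐ r ∂p2R, ‖(fun x : ℝ => x) r‖ ≤ (fun _ : ℝ => (1:ℝ)) r :=
      ae_of_msupp p2R fun r hr => by
        have := hc.suppR01 hr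
        simp only [Real.norm_eq_abs]
        exact abs_le.mpr ⟨by linarith [this.1], this.2⟩
    have hint : Integrable (fun x : ℝ => x) p2R :=
      Integrable.mono' (integrable_const 1) measurable_id.aestronglyMeasurable haeB
    have hER : (∫ r, max (t - r) 0 ∂p2R) = t - ∫ r, r ∂p2R := by
      rw [integral_congr_ae haeR, integral_sub (integrable_const t) hint,
        integral_const]
      simp
    rw [hc.indiff, hER]
  exact ⟨h1, h2, h3, h4, h5, h6⟩

end RepeatedSales
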